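/- In the push-pull protocol with per-call success probability p ∈ (0,1) on the complete graph with n vertices, the probability that an uninformed node stays uninformed in a round starting with u = n - k uninformed nodes is (1 - p(n-u)/n)(1 - p/n)^{n-u}, and for 0 ≤ u < n/p this lies between (1-p)e^{-p} + p e^{-p} u/n and (1-p)e^{-p} + 3p e^{-p} u/n. -/

import Mathlib

open MeasureTheory ENNReal

lemma aux_exp_poly {s : ℝ} (h0 : 0 ≤ s) (h1 : s ≤ 1) :
    Real.exp s ≤ 1 + s + (3/4) * s ^ 2 := by
  have := Real.exp_bound' h0 h1 (n := 2) (by norm_num)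
  simp [Finset.sum_range_succ, Nat.factorial] at this
  nlinarith [this]

lemma aux_upper_core {a s : ℝ} (ha : 0 ≤ a) (h0 : 0 ≤ s) (h1 : s ≤ 1) (has : a + s ≤ 1) :
    (a + s) * Real.exp s ≤ a + 3 * s := by
  have h := aux_exp_poly h0 h1
  nlinarith [sq_nonneg s, mul_nonneg ha h0]

lemma aux_log_lb {x : ℝ} (h0 : 0 < x) (h1 : x < 1) :
    -(x / (1 - x)) ≤ Real.log (1 - x) := by
  have h2 : (0:ℝ) < 1 - x := by linarith
  have := Real.log_le_sub_one_of_pos (inv_pos.2 h2)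
  rw [Real.log_inv] at this
  have hinv : (1 - x)⁻¹ - 1 = x / (1 - x) := by field_simp; ring
  rw [hinv] at this
  linarith

lemma aux_pow_ge_exp {n : ℕ} {p : ℝ} (hn : 0 < n) (hp0 : 0 < p) (hp1 : p < 1) :
    Real.exp (-p) ≤ (1 - p / n) ^ (n - 1) := by
  have hn1 : (1:ℝ) ≤ n := by exact_mod_cast hn
  have hpn0 : 0 < p / n := div_pos hp0 (by linarith)
  have hpn1 : p / n < 1 := by
    rw [div_lt_one (by linarith)]; linarith
  have hb : (0:ℝ) < 1 - p / n := by linarith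
  have hlog := aux_log_lb hpn0 hpn1
  have key : -p ≤ ((n:ℝ) - 1) * Real.log (1 - p / n) := by
    have h1 : ((n:ℝ) - 1) * (-(p/n / (1 - p/n))) ≤ ((n:ℝ) - 1) * Real.log (1 - p/n) :=
      mul_le_mul_of_nonneg_left hlog (by linarith)
    have hnp : (0:ℝ) < (n:ℝ) - p := by linarith
    have heq : ((n:ℝ) - 1) * (-(p/n / (1 - p/n))) = -(((n:ℝ)-1)*p/((n:ℝ)-p)) := by
      field_simp
    have h2 : -p ≤ ((n:ℝ) - 1) * (-(p/n / (1 - p/n))) := by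
      rw [heq, neg_le_neg_iff, div_le_iff₀ hnp]
      nlinarith
    linarith
  have hc : ((n - 1 : ℕ) : ℝ) = (n:ℝ) - 1 := by
    rw [Nat.cast_sub hn]; norm_num
  calc Real.exp (-p) ≤ Real.exp (((n:ℝ) - 1) * Real.log (1 - p / n)) := Real.exp_le_exp.2 key
    _ = (1 - p / n) ^ (n - 1) := by
        rw [← hc, ← Real.log_pow, Real.exp_log (pow_pos hb _)]

lemma aux_lower (n u : ℕ) (p : ℝ) (hn : 0 < n) (hu1 : 1 ≤ u) (hun : u ≤ n)
    (hp0 : 0 < p) (hp1 : p < 1) :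
    (1 - p) * Real.exp (-p) + p * Real.exp (-p) * ((u : ℝ) / n)
      ≤ (1 - p * ((n : ℝ) - u) / n) * (1 - p / (n : ℝ)) ^ (n - u) := by
  have hnR : (0:ℝ) < n := by exact_mod_cast hn
  have hn1 : (1:ℝ) ≤ n := by exact_mod_cast hn
  have hb : (0:ℝ) < 1 - p / n := by
    have : p / n < 1 := by rw [div_lt_one hnR]; linarith
    linarith
  have hpow : Real.exp (-p) ≤ (1 - p / n) ^ (n - u) := by
    calc Real.exp (-p) ≤ (1 - p / n) ^ (n - 1) := aux_pow_ge_exp hn hp0 hp1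
      _ ≤ (1 - p / n) ^ (n - u) :=
        pow_le_pow_of_le_one hb.le
          (by have : 0 ≤ p / (n:ℝ) := by positivity
              linarith) (Nat.sub_le_sub_left hu1 n)
  have hfac : 0 ≤ 1 - p * ((n:ℝ) - u) / n := by
    rw [sub_nonneg, div_le_one hnR]
    have h1 : (u:ℝ) ≥ 0 := by positivity
    nlinarith [hun, (by exact_mod_cast hun : (u:ℝ) ≤ n)]
  have heq : 1 - p * ((n:ℝ) - u) / n = (1 - p) + p * ((u:ℝ)/n) := by
    field_simp
    ring
  calc (1 - p) * Real.exp (-p) + p * Real.exp (-p) * ((u : ℝ) / n)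
      = ((1 - p) + p * ((u:ℝ)/n)) * Real.exp (-p) := by ring
    _ ≤ ((1 - p) + p * ((u:ℝ)/n)) * ((1 - p / n) ^ (n - u)) := by
        apply mul_le_mul_of_nonneg_left hpow
        rw [← heq]; exact hfac
    _ = (1 - p * ((n : ℝ) - u) / n) * (1 - p / (n : ℝ)) ^ (n - u) := by rw [heq]

lemma aux_upper (n u : ℕ) (p : ℝ) (hn : 0 < n) (hun : u ≤ n)
    (hp0 : 0 < p) (hp1 : p < 1) (hu : (u : ℝ) < (n : ℝ) / p) :
    (1 - p * ((n : ℝ) - u) / n) * (1 - p / (n : ℝ)) ^ (n - u)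
      ≤ (1 - p) * Real.exp (-p) + 3 * p * Real.exp (-p) * ((u : ℝ) / n) := by
  have hnR : (0:ℝ) < n := by exact_mod_cast hn
  have huR : (u:ℝ) ≤ n := by exact_mod_cast hun
  have hn1 : (1:ℝ) ≤ n := by exact_mod_cast hn
  have hb : (0:ℝ) < 1 - p / n := by
    have : p / n < 1 := by rw [div_lt_one hnR]; linarith
    linarith
  set s : ℝ := p * ((u:ℝ)/n) with hs
  have hs0 : 0 ≤ s := by positivity
  have hs1 : s ≤ 1 := by
    have h2 : (u:ℝ) * p < n := by rwa [lt_div_iff₀ hp0] at hu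
    rw [hs, mul_div_assoc', div_le_one hnR]
    nlinarith
  have hsp : s ≤ p := by
    rw [hs]
    nlinarith [div_le_one_of_le₀ huR hnR.le, hp0.le]
  have heq : 1 - p * ((n:ℝ) - u) / n = (1 - p) + s := by
    rw [hs]; field_simp; ring
  have hcast : ((n - u : ℕ) : ℝ) = (n:ℝ) - u := by
    rw [Nat.cast_sub hun]
  have hpow : (1 - p / n) ^ (n - u) ≤ Real.exp (-p) * Real.exp s := by
    have h1 : (1 - p / n) ≤ Real.exp (-(p/n)) := by
      have := Real.add_one_le_exp (-(p/n)); linarith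
    calc (1 - p / n) ^ (n - u) ≤ (Real.exp (-(p/n))) ^ (n - u) :=
          pow_le_pow_left₀ hb.le h1 _
      _ = Real.exp (-(p/n) * ((n - u : ℕ):ℝ)) := by
          rw [mul_comm, ← Real.exp_nat_mul]
      _ = Real.exp (-p) * Real.exp s := by
          rw [← Real.exp_add]
          congr 1
          rw [hcast, hs]
          field_simp
          ring
  have hfac0 : 0 ≤ (1 - p) + s := by nlinarith
  calc (1 - p * ((n : ℝ) - u) / n) * (1 - p / (n : ℝ)) ^ (n - u)
      = ((1 - p) + s) * (1 - p / (n : ℝ)) ^ (n - u) := by rw [heq]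
    _ ≤ ((1 - p) + s) * (Real.exp (-p) * Real.exp s) :=
        mul_le_mul_of_nonneg_left hpow hfac0
    _ = (((1 - p) + s) * Real.exp s) * Real.exp (-p) := by ring
    _ ≤ ((1 - p) + 3 * s) * Real.exp (-p) := by
        apply mul_le_mul_of_nonneg_right _ (Real.exp_nonneg _)
        exact aux_upper_core (by linarith) hs0 hs1 (by linarith)
    _ = (1 - p) * Real.exp (-p) + 3 * p * Real.exp (-p) * ((u : ℝ) / n) := by
        rw [hs]; ring


/-- Push-pull protocol with transmission failures on the complete graph with `n` nodes,
`u` of which (those `y` with `n - u ≤ (y : ℕ)`) are uninformed.  Each node independently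
picks a uniformly random target and its call independently succeeds with probability `p`.
The uninformed node `x` stays uninformed iff its own (pull) call does not successfully
reach an informed node and no informed node's (push) call successfully reaches `x`. -/
theorem faulty_push_pull_stay_uninformed (n u : ℕ) (p : ℝ) (hn : 0 < n) (hun : u ≤ n)
    (hp0 : 0 < p) (hp1 : p < 1) (hu : (u : ℝ) < (n : ℝ) / p)
    (x : Fin n) (hx : n - u ≤ (x : ℕ)) :
    (Measure.pi
      (fun _ : Fin n =>
        Measure.prod (@PMF.uniformOfFintype (Fin n) _ ⟨⟨0, hn⟩⟩).toMeasure
          (PMF.bernoulli (Real.toNNReal p)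
            (by simpa using Real.toNNReal_le_one.mpr hp1.le)).toMeasure)
      {ω : Fin n → Fin n × Bool |
        ¬ ((ω x).2 = true ∧ ((ω x).1 : ℕ) < n - u) ∧
        ∀ y : Fin n, (y : ℕ) < n - u → ¬ ((ω y).1 = x ∧ (ω y).2 = true)}).toReal
      = (1 - p * ((n : ℝ) - u) / n) * (1 - p / (n : ℝ)) ^ (n - u) ∧
    (1 - p) * Real.exp (-p) + p * Real.exp (-p) * ((u : ℝ) / n)
      ≤ (1 - p * ((n : ℝ) - u) / n) * (1 - p / (n : ℝ)) ^ (n - u) ∧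
    (1 - p * ((n : ℝ) - u) / n) * (1 - p / (n : ℝ)) ^ (n - u)
      ≤ (1 - p) * Real.exp (-p) + 3 * p * Real.exp (-p) * ((u : ℝ) / n) := by
  have hu1 : 1 ≤ u := by have := x.isLt; omega
  refine ⟨?_, aux_lower n u p hn hu1 hun hp0 hp1, aux_upper n u p hn hun hp0 hp1 hu⟩

  have hnx : Nonempty (Fin n) := ⟨⟨0, hn⟩⟩
  set m := n - u with hm
  have hmn : m < n := lt_of_le_of_lt hx x.isLt
  set U := @PMF.uniformOfFintype (Fin n) _ ⟨⟨0, hn⟩⟩ with hU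
  set Be := PMF.bernoulli (Real.toNNReal p)
        (by simpa using Real.toNNReal_le_one.mpr hp1.le) with hBe
  set μ0 : Measure (Fin n × Bool) := Measure.prod U.toMeasure Be.toMeasure with hμ0
  have hprob : IsProbabilityMeasure μ0 := by rw [hμ0]; infer_instance
  -- atomic measures
  have e : {v : Fin n | (v:ℕ) < m} ≃ Fin m :=
    { toFun := fun w => ⟨(w.1 : ℕ), w.2⟩
      invFun := fun v => ⟨⟨v.1, v.2.trans hmn⟩, v.2⟩
      left_inv := fun w => Subtype.ext (Fin.ext rfl)
      right_inv := fun v => Fin.ext rfl }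
  have hcard : ∀ (inst : Fintype {v : Fin n | (v:ℕ) < m}), @Fintype.card _ inst = m :=
    fun inst => by rw [@Fintype.card_congr _ (Fin m) inst _ e, Fintype.card_fin]
  have huni : U.toMeasure {v : Fin n | (v:ℕ) < m} = (m : ℝ≥0∞) / n := by
    rw [PMF.toMeasure_uniformOfFintype_apply _ MeasurableSet.of_discrete, Fintype.card_fin]
    congr 1
    exact congrArg Nat.cast (hcard _)
  have hunix : U.toMeasure {x} = ((n : ℝ≥0∞))⁻¹ := by
    rw [U.toMeasure_apply_singleton x (measurableSet_singleton x),
      hU, PMF.uniformOfFintype_apply]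
    simp
  have hbern : Be.toMeasure {true} = ENNReal.ofReal p := by
    rw [Be.toMeasure_apply_singleton true (measurableSet_singleton true), hBe,
      PMF.bernoulli_apply]
    rfl
  -- the sets
  set A : Set (Fin n × Bool) := {q | ¬ (q.2 = true ∧ (q.1 : ℕ) < m)} with hA
  set B : Set (Fin n × Bool) := {q | ¬ (q.1 = x ∧ q.2 = true)} with hB
  set S : Fin n → Set (Fin n × Bool) :=
    fun y => if y = x then A else if (y : ℕ) < m then B else Set.univ with hS
  have hxm : ¬ ((x:ℕ) < m) := not_lt.2 hx
  have hE : {ω : Fin n → Fin n × Bool |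
        ¬ ((ω x).2 = true ∧ ((ω x).1 : ℕ) < m) ∧
        ∀ y : Fin n, (y : ℕ) < m → ¬ ((ω y).1 = x ∧ (ω y).2 = true)}
      = Set.pi Set.univ S := by
    ext ω
    simp only [Set.mem_setOf_eq, Set.mem_pi, Set.mem_univ, forall_true_left]
    constructor
    · rintro ⟨h1, h2⟩ y
      by_cases hyx : y = x
      · subst hyx; simpa [hS, hA] using h1
      · by_cases hym : (y : ℕ) < m
        · simpa [hS, hyx, hym, hB] using h2 y hym
        · simp [hS, hyx, hym]
    · intro h
      refine ⟨by simpa [hS, hA] using h x, fun y hym => ?_⟩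
      have hyx : y ≠ x := fun hh => hxm (hh ▸ hym)
      simpa [hS, hyx, hym, hB] using h y
  -- measures of A and B
  have hAc : Aᶜ = {v : Fin n | (v:ℕ) < m} ×ˢ ({true} : Set Bool) := by
    ext ⟨v, b⟩
    simp only [hA, Set.mem_compl_iff, Set.mem_setOf_eq, Set.mem_prod,
      Set.mem_singleton_iff, not_not]
    tauto
  have hAval : μ0 A = 1 - (m : ℝ≥0∞) / n * ENNReal.ofReal p := by
    have hc := prob_compl_eq_one_sub (μ := μ0) (s := Aᶜ) MeasurableSet.of_discrete
    rw [compl_compl] at hc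
    rw [hc, hAc, hμ0, Measure.prod_prod, huni, hbern]
  have hBc : Bᶜ = ({x} : Set (Fin n)) ×ˢ ({true} : Set Bool) := by
    ext ⟨v, b⟩
    simp [hB]
  have hBval : μ0 B = 1 - ((n : ℝ≥0∞))⁻¹ * ENNReal.ofReal p := by
    have hc := prob_compl_eq_one_sub (μ := μ0) (s := Bᶜ) MeasurableSet.of_discrete
    rw [compl_compl] at hc
    rw [hc, hBc, hμ0, Measure.prod_prod, hunix, hbern]
  -- product formula
  have hfilter : (Finset.univ.filter fun y : Fin n => (y:ℕ) < m) = Finset.Iio ⟨m, hmn⟩ := by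
    ext y; simp [Fin.lt_def]
  have hprod : (∏ y : Fin n, μ0 (S y)) = μ0 A * μ0 B ^ m := by
    calc (∏ y : Fin n, μ0 (S y))
        = ∏ y : Fin n, ((if y = x then μ0 A else 1) * (if (y : ℕ) < m then μ0 B else 1)) := by
          refine Finset.prod_congr rfl fun y _ => ?_
          by_cases hyx : y = x
          · subst hyx; simp [hS, hxm]
          · by_cases hym : (y : ℕ) < m
            · simp [hS, hyx, hym]
            · simp [hS, hyx, hym]
      _ = (∏ y : Fin n, if y = x then μ0 A else 1)
            * ∏ y : Fin n, if (y : ℕ) < m then μ0 B else 1 := Finset.prod_mul_distrib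
      _ = μ0 A * μ0 B ^ m := by
          rw [Finset.prod_ite_eq' Finset.univ x (fun _ => μ0 A), if_pos (Finset.mem_univ x),
            ← Finset.prod_filter, Finset.prod_const, hfilter, Fin.card_Iio]
  rw [hE, Measure.pi_pi, hprod, hAval, hBval]
  -- now pure ENNReal/real computation
  have hnR : (0:ℝ) < n := by exact_mod_cast hn
  have hn1 : (1:ℝ) ≤ n := by exact_mod_cast hn
  have hmR : ((m:ℕ):ℝ) ≤ n := by exact_mod_cast hmn.le
  have hA1 : (m : ℝ≥0∞) / n * ENNReal.ofReal p ≤ 1 := by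
    apply mul_le_one'
    · rw [ENNReal.div_le_iff_le_mul (Or.inl (by exact_mod_cast hn.ne'))
        (Or.inl (ENNReal.natCast_ne_top n)), one_mul]
      exact_mod_cast hmn.le
    · exact ENNReal.ofReal_le_one.2 hp1.le
  have hB1 : ((n : ℝ≥0∞))⁻¹ * ENNReal.ofReal p ≤ 1 := by
    apply mul_le_one'
    · exact ENNReal.inv_le_one.2 (by exact_mod_cast hn)
    · exact ENNReal.ofReal_le_one.2 hp1.le
  have hmcast : ((m : ℕ) : ℝ) = (n : ℝ) - u := by
    rw [hm, Nat.cast_sub hun]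
  rw [ENNReal.toReal_mul, ENNReal.toReal_pow,
    ENNReal.toReal_sub_of_le hA1 ENNReal.one_ne_top,
    ENNReal.toReal_sub_of_le hB1 ENNReal.one_ne_top,
    ENNReal.toReal_mul, ENNReal.toReal_mul, ENNReal.toReal_div,
    ENNReal.toReal_inv]
  simp only [ENNReal.toReal_natCast, ENNReal.toReal_ofReal hp0.le, ENNReal.toReal_one]
  congr 1
  · rw [hmcast]; ring
  · congr 1; ring
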